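/- Let B ≥ 2 be an integer base, ℓ, k ≥ 1, and let (a, b, c) be a digit-block triple with property P*_{ℓ;k}. Then a divides b·c, and the integer d = b·c/a satisfies d ≥ B. -/

import Mathlib

/-- For a nontrivial solution of `P*_{ℓ;k}`, the ratio `d = b·c/a` is an
integer and satisfies `d ≥ B`. -/
theorem stmt_14 (B ℓ k a b c : ℕ) (hB : 2 ≤ B) (hℓ : 1 ≤ ℓ) (hk : 1 ≤ k)
    (ha₁ : B ^ (ℓ - 1) ≤ a) (ha₂ : a < B ^ ℓ) (hb : b < B) (hc : c < B ^ k)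
    (hP : (a * B + b) * c = a * (b * B ^ k + c))
    (hz : ¬(a = 0 ∧ b = 0) ∧ ¬(a = 0 ∧ c = 0) ∧ ¬(b = 0 ∧ c = 0))
    (hne : ¬(a = b * ((B ^ ℓ - 1) / (B - 1)) ∧
             c = b * ((B ^ k - 1) / (B - 1)))) :
    a ∣ b * c ∧ B ≤ b * c / a := by
  have hB1 : 1 ≤ B := by omega
  have ha0 : 0 < a := lt_of_lt_of_le (Nat.pow_pos (by omega)) ha₁
  have hBk : 0 < B ^ k := Nat.pow_pos (by omega)
  have hBk1 : 1 ≤ B ^ k := hBk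
  -- b ≠ 0 and c ≠ 0
  have hb0 : 0 < b := by
    rcases Nat.eq_zero_or_pos b with h0 | h; swap; · exact h
    subst h0
    simp only [Nat.add_zero, Nat.zero_mul, Nat.zero_add] at hP
    have hc0 : c = 0 := by
      rcases Nat.eq_zero_or_pos c with h | h
      · exact h
      · exfalso
        have h2 : a * 2 * c ≤ a * B * c :=
          Nat.mul_le_mul_right c (Nat.mul_le_mul_left a hB)
        have h3 : a * 2 * c = a * c + a * c := by ring
        have h4 : 0 < a * c := Nat.mul_pos ha0 h
        omega
    exact absurd ⟨rfl, hc0⟩ hz.2.2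
  have hc0 : 0 < c := by
    rcases Nat.eq_zero_or_pos c with h0 | h; swap; · exact h
    subst h0
    simp only [Nat.mul_zero, Nat.add_zero] at hP
    have hb0' : b = 0 := by
      by_contra hb'
      have : 0 < a * (b * B ^ k) := by positivity
      omega
    exact absurd ⟨hb0', rfl⟩ hz.2.2
  -- key identity in ℕ
  have hkey : a * ((B - 1) * c) + b * c = a * (b * B ^ k) := by
    zify [hB1]
    have hP' : ((a : ℤ) * B + b) * c = a * (b * B ^ k + c) := by exact_mod_cast hP
    ring_nf; ring_nf at hP'; linarith
  have H1 : (B - 1) * c ≤ b * B ^ k := by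
    have : a * ((B - 1) * c) ≤ a * (b * B ^ k) := by omega
    exact Nat.le_of_mul_le_mul_left this ha0
  obtain ⟨d, hd_def⟩ : ∃ d, d = b * B ^ k - (B - 1) * c := ⟨_, rfl⟩
  have hdz : (d : ℤ) = b * B ^ k - ((B : ℤ) - 1) * c := by
    zify [H1, hB1] at hd_def; linarith
  have hd : a * d = b * c := by
    have h2 : ((a : ℤ)) * d = b * c := by
      zify [hB1] at hkey; rw [hdz]; linarith
    exact_mod_cast h2
  refine ⟨⟨d, hd.symm⟩, ?_⟩
  have hdiv : b * c / a = d := by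
    rw [← hd, Nat.mul_div_cancel_left _ ha0]
  rw [hdiv]
  by_contra hlt
  push_neg at hlt
  -- d ≥ 1
  have hd1 : 1 ≤ d := by
    rcases Nat.eq_zero_or_pos d with h0 | h; swap; · exact h
    rw [h0, Nat.mul_zero] at hd
    exact absurd hd.symm (by positivity)
  -- (B-1) ∣ (d - b) in ℤ; since both in [1, B-1], d = b
  obtain ⟨m, hm⟩ : ((B : ℤ) - 1) ∣ ((B : ℤ) ^ k - 1) := by
    have := sub_dvd_pow_sub_pow (B : ℤ) 1 k
    simpa using this
  have hdb : (d : ℤ) - b = ((B : ℤ) - 1) * (b * m - c) := by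
    have hBkz : (B : ℤ) ^ k = ((B : ℤ) - 1) * m + 1 := by linarith
    rw [hdz, hBkz]; ring
  have hdeqb : (d : ℤ) = b := by
    have hbub : (b : ℤ) ≤ (B : ℤ) - 1 := by
      have : b + 1 ≤ B := hb
      exact_mod_cast (by omega : (b : ℤ) ≤ (B : ℤ) - 1)
    have hdub : (d : ℤ) ≤ (B : ℤ) - 1 := by
      have : d + 1 ≤ B := hlt
      push_cast at this ⊢; omega
    have hblb : (1 : ℤ) ≤ b := by exact_mod_cast hb0
    have hdlb : (1 : ℤ) ≤ d := by exact_mod_cast hd1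
    have hBz : (2 : ℤ) ≤ B := by exact_mod_cast hB
    set e : ℤ := b * m - c with he
    rcases lt_trichotomy e 0 with h | h | h
    · have h1 : e ≤ -1 := by omega
      have h2 : ((B : ℤ) - 1) * e ≤ ((B : ℤ) - 1) * (-1) :=
        mul_le_mul_of_nonneg_left h1 (by linarith)
      linarith
    · rw [h, mul_zero] at hdb; linarith
    · have h1 : 1 ≤ e := by omega
      have h2 : ((B : ℤ) - 1) * 1 ≤ ((B : ℤ) - 1) * e :=
        mul_le_mul_of_nonneg_left h1 (by linarith)
      linarith
  have hdb' : d = b := by exact_mod_cast hdeqb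
  -- From a*b = b*c : a = c
  have hac : a = c := by
    rw [hdb'] at hd
    have : b * a = b * c := by linarith [hd]
    exact Nat.eq_of_mul_eq_mul_left hb0 this
  -- (B-1)*c = b*(B^k - 1)
  have hcrep : (B - 1) * c = b * (B ^ k - 1) := by
    zify [hB1, hBk1]
    rw [hdb'] at hdz
    linarith
  -- B^(k-1) ≤ c
  have hclb : B ^ (k - 1) ≤ c := by
    have hk' : k - 1 + 1 = k := by omega
    have hBk1' : 1 ≤ B ^ (k - 1) := Nat.one_le_pow _ _ (by omega)
    have h1 : (B - 1) * B ^ (k - 1) ≤ B ^ k - 1 := by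
      have hpow : B ^ k = B ^ (k - 1) * B := by rw [← pow_succ, hk']
      have hsm : (B - 1) * B ^ (k - 1) = B * B ^ (k - 1) - 1 * B ^ (k - 1) :=
        Nat.sub_mul B 1 (B ^ (k - 1))
      rw [hsm, hpow]
      have : B * B ^ (k - 1) = B ^ (k - 1) * B := Nat.mul_comm _ _
      omega
    have h2 : (B - 1) * B ^ (k - 1) ≤ (B - 1) * c := by
      calc (B - 1) * B ^ (k - 1) ≤ B ^ k - 1 := h1
        _ ≤ b * (B ^ k - 1) := Nat.le_mul_of_pos_left _ hb0
        _ = (B - 1) * c := hcrep.symm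
    exact Nat.le_of_mul_le_mul_left h2 (by omega)
  -- ℓ = k
  have hlk : ℓ = k := by
    have h1 : B ^ (ℓ - 1) < B ^ k := lt_of_le_of_lt (le_trans ha₁ (le_of_eq hac)) hc
    have h2 : B ^ (k - 1) < B ^ ℓ := lt_of_le_of_lt (hclb.trans (le_of_eq hac.symm)) ha₂
    have h1' : ℓ - 1 < k := (Nat.pow_lt_pow_iff_right hB).mp h1
    have h2' : k - 1 < ℓ := (Nat.pow_lt_pow_iff_right hB).mp h2
    omega
  -- derive triviality, contradiction
  obtain ⟨m', hm'⟩ : (B - 1) ∣ (B ^ k - 1) := by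
    have := Nat.sub_dvd_pow_sub_pow B 1 k
    simpa using this
  have hcm : c = b * m' := by
    have h3 : (B - 1) * c = (B - 1) * (b * m') := by
      rw [hcrep, hm']; ring
    exact Nat.eq_of_mul_eq_mul_left (by omega) h3
  have hq : (B ^ k - 1) / (B - 1) = m' := by
    rw [hm', Nat.mul_div_cancel_left _ (by omega)]
  exact hne ⟨by rw [hlk, hq, hac, hcm], by rw [hq, hcm]⟩
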